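/- For every n ≥ 0, the Riemann–Liouville half-derivative of P_n satisfies d/dx[(1/√π)∫_{−1}^x P_n(t)(x−t)^{−1/2} dt] = (1/(√π·√(1+x)))·(U_n(x) + U_{n−1}(x)) for all x ∈ (−1, 1), where U_{−1} = 0. -/

import Mathlib

open Real intervalIntegral

/-- Ultraspherical (Gegenbauer) polynomials via the three-term recurrence
`(n+1) C_{n+1} = 2(n+λ) x C_n − (n+2λ−1) C_{n−1}`, `C_0 = 1`, `C_{-1} = 0`. -/
noncomputable def Geg (l : ℝ) : ℕ → ℝ → ℝ
  | 0, _ => 1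
  | 1, x => 2 * l * x
  | (n + 2), x =>
      (2 * ((n : ℝ) + 1 + l) * x * Geg l (n + 1) x
        - ((n : ℝ) + 2 * l) * Geg l n x) / ((n : ℝ) + 2)

/-- Ultraspherical polynomials with integer index, zero for negative index. -/
noncomputable def GegZ (l : ℝ) (n : ℤ) (x : ℝ) : ℝ :=
  if 0 ≤ n then Geg l n.toNat x else 0

open Polynomial Polynomial.Chebyshev Finset MeasureTheory


noncomputable def Vp (m : ℕ) : ℝ[X] := U ℝ (m : ℤ) - U ℝ ((m : ℤ) - 1)
noncomputable def Wp (m : ℕ) : ℝ[X] := U ℝ (m : ℤ) + U ℝ ((m : ℤ) - 1)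

lemma Ichain (m : ℕ) :
    Vp m + 2 * (1 + X) * derivative (Vp m) = (2 * (m : ℝ[X]) + 1) * Wp m := by
  induction m using Nat.twoStepInduction with
  | zero => simp [Vp, Wp, U_neg_one]
  | one =>
      have h1 : U ℝ ((1:ℕ) : ℤ) = 2 * X := U_one ℝ
      have h0 : U ℝ (((1:ℕ) : ℤ) - 1) = 1 := by norm_num
      simp only [Vp, Wp, h1, h0]
      rw [show derivative (2 * X - 1 : ℝ[X]) = 2 by
        simp]
      push_cast
      ring
  | more m ih0 ih1 =>
      have hr1 : U ℝ ((m:ℤ) + 2) = 2 * X * U ℝ ((m:ℤ) + 1) - U ℝ (m:ℤ) := U_add_two ℝ m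
      have hr2 : U ℝ ((m:ℤ) + 1) = 2 * X * U ℝ (m:ℤ) - U ℝ ((m:ℤ) - 1) := U_add_one ℝ m
      have hd1 := congrArg derivative hr1
      have hd2 := congrArg derivative hr2
      simp only [derivative_sub, derivative_mul, derivative_X, derivative_ofNat] at hd1 hd2
      simp only [Vp, Wp, derivative_sub] at ih0 ih1 ⊢
      push_cast at ih0 ih1 ⊢
      have e1 : ((m:ℤ) + 1 - 1) = (m:ℤ) := by ring
      rw [e1] at ih1
      rw [show ((m:ℤ) + 2 - 1) = (m:ℤ) + 1 from by ring]
      linear_combination (2*(X:ℝ[X])) * ih1 - ih0 - (2*(m:ℝ[X])+4) * hr1 + (2*(1+(X:ℝ[X]))) * hd1 - (2*(m:ℝ[X])+2) * hr2 - (2*(1+(X:ℝ[X]))) * hd2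

noncomputable def L : ℕ → ℝ[X]
  | 0 => 1
  | 1 => X
  | (n+2) => C (((n:ℝ)+2)⁻¹) * ((2*(n:ℝ[X])+3) * X * L (n+1) - ((n:ℝ[X])+1) * L n)

lemma natC (m : ℕ) : ((m:ℝ[X]) + 2) = C ((m:ℝ)+2) := by
  rw [map_add, map_natCast Polynomial.C, map_ofNat]

lemma natC_ne (m : ℕ) : ((m:ℝ[X]) + 2) ≠ 0 := by
  rw [natC]; exact C_ne_zero.mpr (by positivity)

lemma recC (m : ℕ) : ((m:ℝ[X])+2) * L (m+2)
    = (2*(m:ℝ[X])+3) * X * L (m+1) - ((m:ℝ[X])+1) * L m := by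
  have h : ((m:ℝ)+2) ≠ 0 := by positivity
  rw [show L (m+2) = C (((m:ℝ)+2)⁻¹) * ((2*(m:ℝ[X])+3) * X * L (m+1) - ((m:ℝ[X])+1) * L m) from rfl,
    natC, ← mul_assoc, ← Polynomial.C_mul, mul_inv_cancel₀ h, C_1, one_mul]

lemma recN (m : ℕ) : ((m:ℝ[X])+1) * L (m+1)
    = (2*(m:ℝ[X])+1) * X * L m - (m:ℝ[X]) * L (m-1) := by
  cases m with
  | zero => simp [L]
  | succ k =>
      have := recC k
      push_cast
      push_cast at this
      linear_combination this

lemma recD (m : ℕ) : ((m:ℝ[X])+2) * derivative (L (m+2))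
    = (2*(m:ℝ[X])+3) * (L (m+1) + X * derivative (L (m+1))) - ((m:ℝ[X])+1) * derivative (L m) := by
  have := congrArg derivative (recC m)
  simp only [derivative_mul, derivative_add, derivative_sub, derivative_X, derivative_natCast,
    derivative_ofNat, derivative_one] at this
  linear_combination this

lemma legAD (m : ℕ) :
    (derivative (L (m+1)) = X * derivative (L m) + ((m:ℝ[X])+1) * L m) ∧
    ((X^2 - 1) * derivative (L m) = (m:ℝ[X]) * X * L m - (m:ℝ[X]) * L (m-1)) := by
  induction m with
  | zero => constructor <;> simp [L]
  | succ m ih =>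
      obtain ⟨ihA, ihD⟩ := ih
      have hb : X * derivative (L (m+1)) = derivative (L m) + ((m:ℝ[X])+1) * L (m+1) := by
        linear_combination (X:ℝ[X]) * ihA + ihD - recN m
      have hA : derivative (L (m+2)) = X * derivative (L (m+1)) + ((m:ℝ[X])+2) * L (m+1) := by
        apply mul_left_cancel₀ (natC_ne m)
        linear_combination recD m + ((m:ℝ[X])+1) * hb
      have hD : (X^2 - 1) * derivative (L (m+1)) = ((m:ℝ[X])+1) * X * L (m+1) - ((m:ℝ[X])+1) * L m := by
        linear_combination (X^2-1 : ℝ[X]) * ihA + (X:ℝ[X]) * ihD - (X:ℝ[X]) * recN m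
      constructor
      · push_cast; linear_combination hA
      · push_cast; simpa using hD

lemma legC (m : ℕ) : derivative (L (m+2)) = derivative (L m) + (2*(m:ℝ[X])+3) * L (m+1) := by
  obtain ⟨ihA, ihD⟩ := legAD m
  have hb : X * derivative (L (m+1)) = derivative (L m) + ((m:ℝ[X])+1) * L (m+1) := by
    linear_combination (X:ℝ[X]) * ihA + ihD - recN m
  have hA := (legAD (m+1)).1
  push_cast at hA
  linear_combination hA + hb

lemma legEval (m : ℕ) : (L m).eval (-1) = (-1)^m := by
  induction m using Nat.twoStepInduction with
  | zero => simp [L]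
  | one => simp [L]
  | more m ih0 ih1 =>
      have h := congrArg (eval (-1)) (recC m)
      simp only [eval_mul, eval_add, eval_sub, eval_natCast, eval_ofNat, eval_X, ih0, ih1,
        eval_one] at h
      have hne : ((m:ℝ)+2) ≠ 0 := by positivity
      apply mul_left_cancel₀ hne
      rw [h]
      push_cast
      ring

noncomputable def PhiN (N : ℕ) (p : ℝ[X]) : ℝ[X] :=
  ∑ i ∈ range N, C (2/(2*(i:ℝ)+1)) * (hasseDeriv i p) * (C (-1) - X)^i

lemma phiN_congr (p : ℝ[X]) {N M : ℕ} (hN : p.natDegree < N) (hM : p.natDegree < M) :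
    PhiN N p = PhiN M p := by
  wlog h : N ≤ M generalizing N M
  · exact (this hM hN (le_of_not_ge h)).symm
  unfold PhiN
  rw [← sum_range_add_sum_Ico _ h]
  have : ∀ i ∈ Ico N M, C (2/(2*(i:ℝ)+1)) * (hasseDeriv i p) * (C (-1) - X)^i = 0 := by
    intro i hi
    rw [hasseDeriv_eq_zero_of_lt_natDegree p i (lt_of_lt_of_le hN (mem_Ico.mp hi).1)]
    ring
  rw [sum_congr rfl this]
  simp

lemma phiN_add (N : ℕ) (p q : ℝ[X]) : PhiN N (p + q) = PhiN N p + PhiN N q := by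
  unfold PhiN
  rw [← sum_add_distrib]
  refine sum_congr rfl fun i _ => ?_
  rw [map_add]
  ring

lemma phiN_Cmul (N : ℕ) (a : ℝ) (p : ℝ[X]) : PhiN N (C a * p) = C a * PhiN N p := by
  unfold PhiN
  rw [mul_sum]
  refine sum_congr rfl fun i _ => ?_
  have : hasseDeriv i (C a * p) = C a * hasseDeriv i p := by
    rw [← smul_eq_C_mul, ← smul_eq_C_mul]
    exact (hasseDeriv i).map_smul a p
  rw [this]; ring

-- Taylor identity
lemma taylor_sum (p : ℝ[X]) (N : ℕ) (h : p.natDegree < N) :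
    ∑ i ∈ range N, (hasseDeriv i p) * (C (-1) - X)^i = C (p.eval (-1)) := by
  conv_lhs => rw [Polynomial.as_sum_range' p N h]
  rw [eval_eq_sum_range' h, map_sum]
  have swap : ∑ i ∈ range N, hasseDeriv i (∑ n ∈ range N, (monomial n) (p.coeff n)) * (C (-1) - X)^i
      = ∑ n ∈ range N, ∑ i ∈ range N, (hasseDeriv i ((monomial n) (p.coeff n))) * (C (-1) - X)^i := by
    rw [sum_comm]
    refine sum_congr rfl fun i _ => ?_
    rw [map_sum, sum_mul]
  rw [swap]
  refine sum_congr rfl fun n hn => ?_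
  have hinner : ∀ i, (hasseDeriv i ((monomial n) (p.coeff n))) * (C (-1) - X)^i
      = C (p.coeff n) * ((n.choose i : ℝ[X]) * X^(n-i) * (C (-1) - X)^i) := by
    intro i
    rw [hasseDeriv_monomial]
    rw [← C_mul_X_pow_eq_monomial, Polynomial.C_mul, map_natCast Polynomial.C]
    ring
  rw [sum_congr rfl fun i _ => hinner i, ← mul_sum]
  have hrange : ∑ i ∈ range N, ((n.choose i : ℝ[X]) * X^(n-i) * (C (-1) - X)^i)
      = ∑ i ∈ range (n+1), ((n.choose i : ℝ[X]) * X^(n-i) * (C (-1) - X)^i) := by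
    symm
    apply sum_subset (by simp [Nat.succ_le_of_lt (mem_range.mp hn)])
    intro i _ hi
    rw [Nat.choose_eq_zero_of_lt (by simpa using hi)]
    simp
  rw [hrange]
  have hbinom : ∑ i ∈ range (n+1), ((n.choose i : ℝ[X]) * X^(n-i) * (C (-1) - X)^i)
      = ((C (-1) - X) + X)^n := by
    rw [add_pow]
    refine sum_congr rfl fun i hi => ?_
    ring
  rw [hbinom, sub_add_cancel, ← C_pow, ← Polynomial.C_mul]

lemma dh (i : ℕ) (p : ℝ[X]) : derivative (hasseDeriv i p) = hasseDeriv i (derivative p) := by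
  have a : derivative (hasseDeriv i p) = ((1+i).choose 1) • hasseDeriv (1+i) p := by
    rw [← hasseDeriv_one']
    exact LinearMap.congr_fun (hasseDeriv_comp 1 i) p
  have b : hasseDeriv i (derivative p) = ((i+1).choose i) • hasseDeriv (i+1) p := by
    rw [← hasseDeriv_one']
    exact LinearMap.congr_fun (hasseDeriv_comp i 1) p
  rw [a, b, Nat.choose_one_right, Nat.choose_succ_self_right, Nat.add_comm 1 i]

lemma phiR (p : ℝ[X]) (N : ℕ) (h : p.natDegree < N) :
    PhiN N p + 2*(1+X)*derivative (PhiN N p)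
      = 2*(1+X)*PhiN N (derivative p) + C (2 * p.eval (-1)) := by
  have hS : derivative (PhiN N p) = PhiN N (derivative p)
      - ∑ i ∈ range N, C (2/(2*(i:ℝ)+1) * i) * hasseDeriv i p * (C (-1) - X)^(i-1) := by
    unfold PhiN
    rw [derivative_sum, ← sum_sub_distrib]
    refine sum_congr rfl fun i _ => ?_
    rw [derivative_mul, derivative_mul, derivative_C, derivative_pow, dh]
    rw [show derivative (C (-1) - X : ℝ[X]) = -1 by simp]
    rw [Polynomial.C_mul, map_natCast Polynomial.C i]
    ring
  have key : PhiN N p - 2*(1+X) *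
      (∑ i ∈ range N, C (2/(2*(i:ℝ)+1) * i) * hasseDeriv i p * (C (-1) - X)^(i-1))
      = C (2 * p.eval (-1)) := by
    have expand : PhiN N p - 2*(1+X) *
        (∑ i ∈ range N, C (2/(2*(i:ℝ)+1) * i) * hasseDeriv i p * (C (-1) - X)^(i-1))
        = ∑ i ∈ range N, 2 * (hasseDeriv i p * (C (-1) - X)^i) := by
      unfold PhiN
      rw [mul_sum, ← sum_sub_distrib]
      refine sum_congr rfl fun i _ => ?_
      cases i with
      | zero =>
          have h2 : (C 2 : ℝ[X]) = 2 := map_ofNat Polynomial.C 2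
          norm_num [h2]
      | succ k =>
          simp only [Nat.add_sub_cancel]
          push_cast
          rw [show (2:ℝ[X]) = C 2 from (map_ofNat Polynomial.C 2).symm]
          have hc : C (2/(2*((k:ℝ)+1)+1)) + C 2 * C (2/(2*((k:ℝ)+1)+1) * ((k:ℝ)+1)) = C 2 := by
            rw [← Polynomial.C_mul, ← map_add]
            congr 1
            have hne : 2*((k:ℝ)+1)+1 ≠ 0 := by positivity
            field_simp
            ring
          have hyx0 : (1 + X) + (C (-1) - X) = (0:ℝ[X]) := by
            simp
          linear_combination (hasseDeriv (k+1) p * (C (-1) - X)^(k+1)) * hc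
            - (C 2 * C (2/(2*((k:ℝ)+1)+1) * ((k:ℝ)+1)) * hasseDeriv (k+1) p * (C (-1) - X)^k) * hyx0
    rw [expand, ← mul_sum, taylor_sum p N h, Polynomial.C_mul, map_ofNat]
  linear_combination key + (2*(1+X:ℝ[X])) * hS

lemma ode_unique (q : ℝ[X]) (h : q + 2*(1+X)*derivative q = 0) : q = 0 := by
  by_contra hq
  cases hd : q.natDegree with
  | zero =>
      have hC := Polynomial.eq_C_of_natDegree_eq_zero hd
      rw [hC] at h
      simp at h
      exact hq (by rw [hC, h, map_zero])
  | succ k =>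
      have e : (2*(1+X)*derivative q : ℝ[X]) = C 2 * derivative q + C 2 * (X * derivative q) := by
        rw [map_ofNat]; ring
      have hcoeff := congrArg (fun r => r.coeff (k+1)) h
      simp only [e, coeff_add, coeff_zero, coeff_C_mul, coeff_X_mul] at hcoeff
      have h1 : (derivative q).coeff (k+1) = 0 := by
        rw [coeff_derivative]
        have : q.coeff (k+1+1) = 0 :=
          coeff_eq_zero_of_natDegree_lt (by rw [hd]; omega)
        rw [this]; ring
      have h2 : (derivative q).coeff k = q.coeff (k+1) * ((k:ℝ)+1) := by
        rw [coeff_derivative]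
      rw [h1, h2] at hcoeff
      have hlead : q.coeff (k+1) ≠ 0 := by
        rw [← hd]
        exact Polynomial.leadingCoeff_ne_zero.mpr hq
      have : q.coeff (k+1) * (1 + 2*((k:ℝ)+1)) = 0 := by linarith [hcoeff]
      have hne : (1 + 2*((k:ℝ)+1)) ≠ 0 := by positivity
      exact hlead (by
        have := mul_eq_zero.mp this
        tauto)

noncomputable def Phi (p : ℝ[X]) : ℝ[X] := PhiN (p.natDegree + 1) p

lemma phiN_eq_phi (p : ℝ[X]) {N : ℕ} (hN : p.natDegree < N) : PhiN N p = Phi p :=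
  phiN_congr p hN (Nat.lt_succ_self _)

lemma castC2 (a b : ℝ) (m : ℕ) : (C (a * (m:ℝ) + b) : ℝ[X]) = a • (m:ℝ[X]) + C b := by
  rw [map_add, map_mul, map_natCast, smul_eq_C_mul]

lemma Wstep (m : ℕ) : Wp (m+2) = Wp m + 2*(1+X) * Vp (m+1) := by
  have hr1 : U ℝ ((m:ℤ) + 2) = 2 * X * U ℝ ((m:ℤ) + 1) - U ℝ (m:ℤ) := U_add_two ℝ m
  have hr2 : U ℝ ((m:ℤ) + 1) = 2 * X * U ℝ (m:ℤ) - U ℝ ((m:ℤ) - 1) := U_add_one ℝ m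
  simp only [Vp, Wp]
  push_cast
  rw [show ((m:ℤ) + 2 - 1) = (m:ℤ) + 1 from by ring, show ((m:ℤ) + 1 - 1) = (m:ℤ) from by ring]
  linear_combination hr1 - hr2

theorem MainPhi (m : ℕ) : Phi (L m) = C (2/(2*(m:ℝ)+1)) * Vp m := by
  induction m using Nat.twoStepInduction with
  | zero =>
      have hV : Vp 0 = 1 := by norm_num [Vp, U_neg_one]
      have hL : L 0 = 1 := rfl
      rw [hV, hL]
      unfold Phi PhiN
      norm_num [hasseDeriv_zero']
  | one =>
      have hV : Vp 1 = 2*X - 1 := by norm_num [Vp, U_one]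
      have hL : L 1 = X := rfl
      rw [hV, hL]
      unfold Phi PhiN
      rw [natDegree_X]
      rw [Finset.sum_range_succ, Finset.sum_range_one]
      norm_num [hasseDeriv_zero', hasseDeriv_one']
      have h23 : (C ((2:ℝ)/3) : ℝ[X]) * 3 = 2 := by
        rw [show (3:ℝ[X]) = C 3 from (map_ofNat Polynomial.C 3).symm, ← Polynomial.C_mul]
        norm_num
        exact map_ofNat Polynomial.C 2
      have hm1 : (C (-1:ℝ) : ℝ[X]) = -1 := by simp
      have hC2 : (C (2:ℝ) : ℝ[X]) = 2 := map_ofNat Polynomial.C 2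
      linear_combination (Polynomial.X : ℝ[X]) * hC2 - Polynomial.X * h23
  | more m ih0 ih1 =>
      set N : ℕ := (L m).natDegree + (L (m+1)).natDegree + (L (m+2)).natDegree + 1 with hN
      have hNm : (L m).natDegree < N := by omega
      have hNm1 : (L (m+1)).natDegree < N := by omega
      have hNm2 : (L (m+2)).natDegree < N := by omega
      have hDm : (derivative (L m)).natDegree < N :=
        lt_of_le_of_lt (le_trans (natDegree_derivative_le _) (Nat.sub_le _ _)) hNm
      have hDm2 : (derivative (L (m+2))).natDegree < N :=
        lt_of_le_of_lt (le_trans (natDegree_derivative_le _) (Nat.sub_le _ _)) hNm2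
      -- PhiN versions of the IHs
      have h_m : PhiN N (L m) = C (2/(2*(m:ℝ)+1)) * Vp m := by
        rw [phiN_eq_phi _ hNm, ih0]
      have h_m1 : PhiN N (L (m+1)) = C (2/(2*(m:ℝ)+3)) * Vp (m+1) := by
        have hc : (2*((m+1:ℕ):ℝ)+1) = 2*(m:ℝ)+3 := by push_cast; ring
        rw [phiN_eq_phi _ hNm1, ih1, hc]
      -- step 1 : relation R for L m
      have hR0 := phiR (L m) N hNm
      rw [legEval m, h_m] at hR0
      have hIm := Ichain m
      have hcast1 : (2*(m:ℝ[X])+1) = C (2*(m:ℝ)+1) := by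
        rw [map_add, map_mul, map_natCast, map_ofNat, map_one]
      have hCC1 : C ((2:ℝ)/(2*(m:ℝ)+1)) * C (2*(m:ℝ)+1) = C 2 := by
        rw [← Polynomial.C_mul, div_mul_cancel₀]
        positivity
      have hstep1 : 2*(1+X) * PhiN N (derivative (L m))
          = C 2 * Wp m - C (2 * (-1)^m) := by
        have hd : derivative (C (2/(2*(m:ℝ)+1)) * Vp m)
            = C (2/(2*(m:ℝ)+1)) * derivative (Vp m) := derivative_C_mul _ _
        rw [hd] at hR0
        rw [hcast1] at hIm
        linear_combination C ((2:ℝ)/(2*(m:ℝ)+1)) * hIm + (Wp m) * hCC1 - hR0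
      -- step 2 : apply Phi to Legendre derivative recurrence
      have hC := legC m
      have hcast3 : (2*(m:ℝ[X])+3) = C (2*(m:ℝ)+3) := by
        rw [map_add, map_mul, map_natCast, map_ofNat, map_ofNat]
      rw [hcast3] at hC
      have hPhiC : PhiN N (derivative (L (m+2)))
          = PhiN N (derivative (L m)) + C (2*(m:ℝ)+3) * PhiN N (L (m+1)) := by
        rw [hC, phiN_add, phiN_Cmul]
      have hCC3 : C (2*(m:ℝ)+3) * C ((2:ℝ)/(2*(m:ℝ)+3)) = C 2 := by
        rw [← Polynomial.C_mul, mul_div_cancel₀]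
        positivity
      have hW := Wstep m
      have hstep2 : 2*(1+X) * PhiN N (derivative (L (m+2)))
          = C 2 * Wp (m+2) - C (2 * (-1)^m) := by
        rw [hPhiC, h_m1]
        linear_combination hstep1 + (2*(1+X:ℝ[X]) * Vp (m+1)) * hCC3
          - (C (2:ℝ)) * hW
      -- step 3 : relation R for L (m+2)
      have hR2 := phiR (L (m+2)) N hNm2
      rw [legEval (m+2), hstep2] at hR2
      have hode : PhiN N (L (m+2)) + 2*(1+X)*derivative (PhiN N (L (m+2)))
          = C 2 * Wp (m+2) := by
        rw [hR2]
        have : ((-1:ℝ))^(m+2) = (-1)^m := by ring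
        rw [this]
        ring
      -- step 4 : candidate satisfies the same ODE
      have hI2 := Ichain (m+2)
      have hcast5 : (2*((m+2:ℕ):ℝ[X])+1) = C (2*(m:ℝ)+5) := by
        push_cast
        rw [show (2*((m:ℝ[X])+2)+1) = 2*(m:ℝ[X]) + 5 from by ring]
        rw [map_add, map_mul, map_natCast, map_ofNat, map_ofNat]
      rw [hcast5] at hI2
      have hCC5 : C ((2:ℝ)/(2*(m:ℝ)+5)) * C (2*(m:ℝ)+5) = C 2 := by
        rw [← Polynomial.C_mul, div_mul_cancel₀]
        positivity
      have hcand : (C (2/(2*(m:ℝ)+5)) * Vp (m+2))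
          + 2*(1+X)*derivative (C (2/(2*(m:ℝ)+5)) * Vp (m+2)) = C 2 * Wp (m+2) := by
        rw [derivative_C_mul]
        linear_combination C ((2:ℝ)/(2*(m:ℝ)+5)) * hI2 + (Wp (m+2)) * hCC5
      -- step 5 : uniqueness
      have hE : PhiN N (L (m+2)) - C (2/(2*(m:ℝ)+5)) * Vp (m+2) = 0 := by
        apply ode_unique
        rw [derivative_sub, derivative_C_mul]
        rw [derivative_C_mul] at hcand
        linear_combination hode - hcand
      have : PhiN N (L (m+2)) = C (2/(2*(m:ℝ)+5)) * Vp (m+2) := by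
        linear_combination hE
      rw [phiN_eq_phi _ hNm2] at this
      rw [this]
      congr 2
      push_cast
      ring

lemma integrable_inv_sqrt (p : ℝ[X]) (x : ℝ) (hx : -1 < x) :
    IntervalIntegrable (fun t => p.eval t / Real.sqrt (x - t)) volume (-1) x := by
  constructor
  · have base : IntervalIntegrable (fun u : ℝ => u ^ (-(1/2) : ℝ)) volume 0 (x+1) :=
      intervalIntegral.intervalIntegrable_rpow' (by norm_num)
    have comp := base.comp_sub_left x
    rw [show x - (x+1) = -1 by ring, sub_zero] at comp
    have mul := comp.continuousOn_mul
      (Polynomial.continuous p).continuousOn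
    have h1 := mul.symm.1
    apply h1.congr_fun ?_ measurableSet_Ioc
    intro t ht
    obtain ⟨ht1, ht2⟩ := ht
    have hxt : (0:ℝ) ≤ x - t := by linarith
    show eval t p * (x - t) ^ (-(1/2):ℝ) = eval t p / Real.sqrt (x - t)
    rw [Real.sqrt_eq_rpow, div_eq_mul_inv (eval t p), ← Real.rpow_neg hxt]
  · rw [Set.Ioc_eq_empty (by linarith)]
    exact integrableOn_empty

lemma integral_eval (p : ℝ[X]) (x : ℝ) (hx : -1 < x) :
    ∫ t in (-1:ℝ)..x, p.eval t / Real.sqrt (x - t)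
      = Real.sqrt (1+x) * (Phi p).eval x := by
  set N := p.natDegree + 1 with hN
  set b : ℕ → ℝ := fun i => (hasseDeriv i p).eval x with hb
  set s : ℝ → ℝ := fun t => ∑ i ∈ range N, b i / (2*(i:ℝ)+1) * (t - x)^i with hs
  set s' : ℝ → ℝ := fun t => ∑ i ∈ range N, b i / (2*(i:ℝ)+1) * i * (t - x)^(i-1) with hs'
  set f : ℝ → ℝ := fun t => -2 * Real.sqrt (x - t) * s t with hf
  -- Taylor expansion
  have ht : ∀ t, p.eval t = ∑ i ∈ range N, b i * (t - x)^i := by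
    intro t
    conv_lhs => rw [← Polynomial.sum_taylor_eq p x]
    rw [Polynomial.sum_over_range' _ (fun n => by simp) N
      (by rw [Polynomial.natDegree_taylor]; omega)]
    rw [Polynomial.eval_finset_sum]
    refine sum_congr rfl fun i _ => ?_
    simp [Polynomial.taylor_coeff, b]
  -- key pointwise identity
  have key : ∀ t, s t + 2*(t-x) * s' t = p.eval t := by
    intro t
    rw [ht t, hs, hs', mul_sum, ← sum_add_distrib]
    refine sum_congr rfl fun i _ => ?_
    cases i with
    | zero => norm_num
    | succ k =>
        simp only [Nat.add_sub_cancel]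
        have hk : 2*((k:ℝ)+1)+1 ≠ 0 := by positivity
        push_cast
        field_simp
        ring
  -- derivative of s
  have hds : ∀ t, HasDerivAt s (s' t) t := by
    intro t
    rw [hs, hs']
    apply HasDerivAt.fun_sum
    intro i _
    have h := (((hasDerivAt_id t).sub_const x).pow i).const_mul (b i / (2*(i:ℝ)+1))
    refine h.congr_deriv ?_
    simp only [id_eq]
    ring
  -- derivative of f on the interior
  have hderiv : ∀ t ∈ Set.Ioo (-1:ℝ) x, HasDerivAt f (p.eval t / Real.sqrt (x - t)) t := by
    intro t htx
    have h1 : 0 < x - t := by linarith [htx.2]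
    have hsne : Real.sqrt (x - t) ≠ 0 := ne_of_gt (Real.sqrt_pos.mpr h1)
    have h2 : Real.sqrt (x-t) * Real.sqrt (x-t) = x - t := Real.mul_self_sqrt h1.le
    have hsqrt : HasDerivAt (fun t => Real.sqrt (x - t)) (1/(2*Real.sqrt (x-t)) * (-1)) t := by
      exact (Real.hasDerivAt_sqrt (ne_of_gt h1)).comp t
        (((hasDerivAt_id t).const_sub x))
    have hprod := ((hsqrt.const_mul (-2)).mul (hds t))
    refine hprod.congr_deriv ?_
    symm
    rw [div_eq_iff hsne]
    field_simp
    linear_combination (2 * s' t) * h2 - (key t)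
  -- continuity of f
  have hcont : ContinuousOn f (Set.Icc (-1) x) := by
    apply Continuous.continuousOn
    apply Continuous.mul
    · exact continuous_const.mul (Real.continuous_sqrt.comp (continuous_const.sub continuous_id))
    · rw [hs]
      exact continuous_finset_sum _ fun i _ =>
        continuous_const.mul ((continuous_id.sub continuous_const).pow i)
  have hftc := intervalIntegral.integral_eq_sub_of_hasDeriv_right_of_le
    (by linarith : (-1:ℝ) ≤ x) hcont
    (fun t htx => (hderiv t htx).hasDerivWithinAt)
    (integrable_inv_sqrt p x hx)
  rw [hftc]
  have hfx : f x = 0 := by rw [hf]; simp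
  have hfm1 : f (-1) = -2 * Real.sqrt (1+x) * s (-1) := by
    show -2 * Real.sqrt (x - (-1)) * s (-1) = _
    rw [show x - (-1) = 1 + x by ring]
  rw [hfx, hfm1]
  have hphi : (Phi p).eval x = 2 * s (-1) := by
    unfold Phi PhiN
    rw [Polynomial.eval_finset_sum, hs, mul_sum]
    refine sum_congr rfl fun i _ => ?_
    simp only [eval_mul, eval_pow, eval_sub, eval_C, eval_X]
    have hbi : eval x (hasseDeriv i p) = b i := rfl
    rw [hbi]
    have hne : 2*(i:ℝ)+1 ≠ 0 := by positivity
    field_simp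
  rw [hphi]
  ring
lemma geg_half (m : ℕ) (x : ℝ) : Geg (1/2) m x = (L m).eval x := by
  induction m using Nat.twoStepInduction with
  | zero => simp [Geg, L]
  | one => simp [Geg, L]
  | more m ih0 ih1 =>
      show (2 * ((m : ℝ) + 1 + 1/2) * x * Geg (1/2) (m + 1) x
        - ((m : ℝ) + 2 * (1/2)) * Geg (1/2) m x) / ((m : ℝ) + 2) = _
      rw [ih0, ih1]
      rw [show L (m+2) = C (((m:ℝ)+2)⁻¹) * ((2*(m:ℝ[X])+3) * X * L (m+1) - ((m:ℝ[X])+1) * L m)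
        from rfl]
      have hne : ((m:ℝ)+2) ≠ 0 := by positivity
      simp only [eval_mul, eval_add, eval_sub, eval_C, eval_X, eval_natCast, eval_ofNat, eval_one]
      rw [div_eq_mul_inv, mul_comm]
      congr 1
      ring

lemma geg_one (m : ℕ) (x : ℝ) : Geg 1 m x = (U ℝ (m:ℤ)).eval x := by
  induction m using Nat.twoStepInduction with
  | zero => simp [Geg]
  | one =>
      show 2 * 1 * x = (U ℝ ((1:ℕ):ℤ)).eval x
      norm_num [U_one]
  | more m ih0 ih1 =>
      show (2 * ((m : ℝ) + 1 + 1) * x * Geg 1 (m + 1) x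
        - ((m : ℝ) + 2 * 1) * Geg 1 m x) / ((m : ℝ) + 2) = _
      rw [ih0, ih1]
      have hU := congrArg (eval x) (U_add_two ℝ (m:ℤ))
      simp only [eval_mul, eval_sub, eval_ofNat, eval_X] at hU
      rw [show (((m+2:ℕ)):ℤ) = (m:ℤ)+2 from by push_cast; ring, hU]
      have hne : ((m:ℝ)+2) ≠ 0 := by positivity
      rw [div_eq_iff hne]
      push_cast
      ring

theorem stmt10 (n : ℤ) (hn : 0 ≤ n) (x : ℝ) (hx : x ∈ Set.Ioo (-1 : ℝ) 1) :
    HasDerivAt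
      (fun y => (1 / Real.sqrt π) * ∫ t in (-1 : ℝ)..y, GegZ (1/2) n t / Real.sqrt (y - t))
      (1 / (Real.sqrt π * Real.sqrt (1 + x)) * (GegZ 1 n x + GegZ 1 (n - 1) x)) x := by
  obtain ⟨hx1, hx2⟩ := hx
  set m : ℕ := n.toNat with hm
  have hnm : n = (m : ℤ) := (Int.toNat_of_nonneg hn).symm
  have h1x : (0:ℝ) < 1 + x := by linarith
  have hsπ : Real.sqrt π ≠ 0 := ne_of_gt (Real.sqrt_pos.mpr Real.pi_pos)
  have hs1x : Real.sqrt (1+x) ≠ 0 := ne_of_gt (Real.sqrt_pos.mpr h1x)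
  have hUA : GegZ 1 n x = (U ℝ (m:ℤ)).eval x := by
    rw [GegZ, if_pos hn, ← hm, geg_one]
  have hUB : GegZ 1 (n-1) x = (U ℝ ((m:ℤ)-1)).eval x := by
    rcases lt_or_eq_of_le hn with hpos | hzero
    · have h0 : (0:ℤ) ≤ n - 1 := by omega
      rw [GegZ, if_pos h0, geg_one, Int.toNat_of_nonneg h0, hnm]
    · have hn0 : n = 0 := hzero.symm
      have hm0 : m = 0 := by simp [hm, hn0]
      rw [hn0, hm0]
      norm_num [GegZ, U_neg_one]
  -- closed form of the integral for y > -1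
  have hev : (fun y => (1 / Real.sqrt π) * ∫ t in (-1:ℝ)..y, GegZ (1/2) n t / Real.sqrt (y - t))
      =ᶠ[nhds x] (fun y => (1 / Real.sqrt π) * (Real.sqrt (1+y) * (Phi (L m)).eval y)) := by
    filter_upwards [Ioi_mem_nhds hx1] with y hy
    have hint : (fun t => GegZ (1/2) n t / Real.sqrt (y - t))
        = fun t => (L m).eval t / Real.sqrt (y - t) := by
      funext t
      rw [GegZ, if_pos hn, ← hm, geg_half]
    rw [hint, integral_eval (L m) y hy]
  -- derivative of the closed form
  have hsq : HasDerivAt (fun y => Real.sqrt (1+y)) (1/(2*Real.sqrt (1+x))) x := by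
    have h := (Real.hasDerivAt_sqrt (ne_of_gt h1x)).comp x ((hasDerivAt_id x).const_add 1)
    simpa [Function.comp_def] using h
  have hpoly := (Phi (L m)).hasDerivAt x
  have hprod := (hsq.mul hpoly).const_mul (1 / Real.sqrt π)
  -- value computations
  have hMain := congrArg (eval x) (MainPhi m)
  simp only [eval_mul, eval_C] at hMain
  have hφ' : (derivative (Phi (L m))).eval x
      = (2/(2*(m:ℝ)+1)) * (derivative (Vp m)).eval x := by
    have h := congrArg derivative (MainPhi m)
    rw [derivative_C_mul] at h
    have h2 := congrArg (eval x) h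
    simpa only [eval_mul, eval_C] using h2
  have hIe : (Vp m).eval x + 2*(1+x)*(derivative (Vp m)).eval x
      = (2*(m:ℝ)+1) * ((U ℝ (m:ℤ)).eval x + (U ℝ ((m:ℤ)-1)).eval x) := by
    have h := congrArg (eval x) (Ichain m)
    simpa only [Wp, eval_mul, eval_add, eval_one, eval_X, eval_natCast, eval_ofNat] using h
  have hVe : (Vp m).eval x = (U ℝ (m:ℤ)).eval x - (U ℝ ((m:ℤ)-1)).eval x := by
    simp only [Vp, eval_sub]
  have hss : Real.sqrt (1+x) * Real.sqrt (1+x) = 1 + x := Real.mul_self_sqrt h1x.le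
  have h2m : 2*(m:ℝ)+1 ≠ 0 := by positivity
  have hval : 1 / Real.sqrt π * (1/(2*Real.sqrt (1+x)) * (Phi (L m)).eval x
        + Real.sqrt (1+x) * (derivative (Phi (L m))).eval x)
      = 1 / (Real.sqrt π * Real.sqrt (1 + x)) * (GegZ 1 n x + GegZ 1 (n - 1) x) := by
    rw [hUA, hUB, hMain, hφ']
    field_simp [hsπ, hs1x, h2m]
    linear_combination hIe + 2 * eval x (derivative (Vp m)) * hss
  refine HasDerivAt.congr_of_eventuallyEq ?_ hev
  rw [← hval]
  exact hprod
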